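/- For configurations C, C' ∈ {•,∘}^n with W(C' → C) ≠ 0, the set F(C' → C) = (R∘f)^{-1}{C'} ∩ (R∘f∘π)^{-1}{C} has cardinality equal to |R^{-1}{C'}|: for each tree T' ∈ R^{-1}{C'} there is exactly one marking of T' such that applying π yields a tree reducing to C. -/

import Mathlib

/-- Plane binary trees: every internal vertex has exactly two ordered children. -/
inductive PTree where
  | leaf : PTree
  | node : PTree → PTree → PTree
  deriving DecidableEq

namespace PTree

/-- number of leaves (endpoints) -/
def numLeaves : PTree → ℕ
  | leaf => 1
  | node l r => numLeaves l + numLeaves r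

/-- directions of the leaves of a subtree which is itself a `b`-child
(`true` = left child, `false` = right child), in left-to-right order. -/
def dirsAux : PTree → Bool → List Bool
  | leaf, b => [b]
  | node l r, _ => dirsAux l true ++ dirsAux r false

/-- the left/right-child directions of all leaves of a tree, left to right
(`true` = left child, `false` = right child). -/
def dirs : PTree → List Bool
  | leaf => []
  | node l r => dirsAux l true ++ dirsAux r false

/-- The reduction map `R`: the directions of the 2nd through (n+1)-th leaves;
`true` = • (occupied site, left child), `false` = ∘ (empty site, right child). -/
def red (T : PTree) : List Bool := ((dirs T).drop 1).dropLast

/-- number of internal vertices on the path from the leftmost leaf to the root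
(root included). -/
def lCount : PTree → ℕ
  | leaf => 0
  | node l _ => lCount l + 1

/-- number of internal vertices on the path from the rightmost leaf to the root
(root included). -/
def rCount : PTree → ℕ
  | leaf => 0
  | node _ r => rCount r + 1

/-- number of last branching vertices (internal vertices whose two children are leaves). -/
def lbCount : PTree → ℕ
  | leaf => 0
  | node leaf leaf => 1
  | node l r => lbCount l + lbCount r

end PTree

/-- Marked plane binary trees: a plane binary tree with exactly one of its
last branching vertices marked (the constructor `mark` is the marked vertex,
a vertex with two leaf children). -/
inductive MTree where
  | mark : MTree
  | nodeL : MTree → PTree → MTree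
  | nodeR : PTree → MTree → MTree
  deriving DecidableEq

namespace MTree

/-- forgetful map to plane binary trees -/
def forget : MTree → PTree
  | mark => .node .leaf .leaf
  | nodeL l r => .node (forget l) r
  | nodeR l r => .node l (forget r)

/-- collapse the marked vertex (with its two leaf children) to a single leaf. -/
def collapseT : MTree → PTree
  | mark => .leaf
  | nodeL l r => .node (collapseT l) r
  | nodeR l r => .node l (collapseT r)

/-- index (left to right, starting from 0) of the leaf of `collapseT` obtained
by collapsing the marked vertex. -/
def markIdx : MTree → ℕ
  | mark => 0
  | nodeL l _ => markIdx l
  | nodeR l r => l.numLeaves + markIdx r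

end MTree

/-- replace the `i`-th leaf of a tree by a marked last branching vertex. -/
def expand : PTree → ℕ → MTree
  | .leaf, _ => .mark
  | .node l r, i =>
      if i < l.numLeaves then .nodeL (expand l i) r
      else .nodeR l (expand r (i - l.numLeaves))

/-- index of the next right-child (`false`) leaf strictly after position `i`;
if there is none, the index of the rightmost left-child (`true`) leaf. -/
def nextFalseIdx (w : List Bool) (i : ℕ) : ℕ :=
  if (w.drop (i+1)).findIdx (fun b => !b) < (w.drop (i+1)).length
  then i + 1 + (w.drop (i+1)).findIdx (fun b => !b)
  else w.length - 1 - (w.reverse.findIdx (fun b => b))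

/-- index of the closest left-child (`true`) leaf strictly before position `i`;
if there is none, the index of the leftmost right-child (`false`) leaf. -/
def prevTrueIdx (w : List Bool) (i : ℕ) : ℕ :=
  if ((w.take i).reverse).findIdx (fun b => b) < i
  then i - 1 - ((w.take i).reverse).findIdx (fun b => b)
  else w.findIdx (fun b => !b)

/-- position of the leaf where the removed segment is re-glued by `π`. -/
def target (w : List Bool) (i : ℕ) : ℕ :=
  if w.getD i true then prevTrueIdx w i else nextFalseIdx w i

/-- The map `π` on marked trees: remove the segment joining the marked vertex to
its left (resp. right) leaf when the marked vertex is a right (resp. left) child,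
and glue it to the next right- (resp. left-) child leaf to the right (resp. left),
with the boundary rule when no such leaf exists; the new vertex is marked. -/
def piM (M : MTree) : MTree :=
  expand M.collapseT (target M.collapseT.dirs M.markIdx)

open Classical in
/-- Transition rates of the `n`-site open-boundary TASEP, on configurations
encoded as lists of booleans (`true` = •, `false` = ∘). -/
noncomputable def rate (α β : ℝ) (C C' : List Bool) : ℝ :=
  if ∃ A, C = false :: A ∧ C' = true :: A then α
  else if ∃ A, C = A ++ [true] ∧ C' = A ++ [false] then β
  else if ∃ A A', C = A ++ true :: false :: A' ∧ C' = A ++ false :: true :: A' then 1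
  else 0

/-- number of active bonds of a configuration: injection at site 1 if empty,
extraction at site n if occupied, and hops across •∘ pairs. -/
def activeCount (C : List Bool) : ℕ :=
  (if C.head? = some false then 1 else 0) +
  ((C.zip C.tail).count (true, false)) +
  (if C.getLast? = some true then 1 else 0)

/-- the weight `μ(T) = α^{-l(T)} β^{-r(T)}` of a plane binary tree. -/
noncomputable def mu (α β : ℝ) (T : PTree) : ℝ :=
  α ^ (-(T.lCount : ℤ)) * β ^ (-(T.rCount : ℤ))

/-- number of internal vertices on the path from the leftmost leaf to the root,
excluding the marked vertex. -/
def lCountM : MTree → ℕ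
  | .mark => 0
  | .nodeL l _ => lCountM l + 1
  | .nodeR l _ => l.lCount + 1

/-- number of internal vertices on the path from the rightmost leaf to the root,
excluding the marked vertex. -/
def rCountM : MTree → ℕ
  | .mark => 0
  | .nodeR _ r => rCountM r + 1
  | .nodeL _ r => r.rCount + 1

/-- the weight `μ̂` of a marked tree, excluding the marked vertex from the counts. -/
noncomputable def muHat (α β : ℝ) (M : MTree) : ℝ :=
  α ^ (-(lCountM M : ℤ)) * β ^ (-(rCountM M : ℤ))



section Aux
open List
/-- insert the pair (true,false) replacing the letter at position `j`. -/
def ins (w : List Bool) (j : ℕ) : List Bool := w.take j ++ true :: false :: w.drop (j+1)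

lemma length_ins (w : List Bool) (j : ℕ) (h : j < w.length) :
    (ins w j).length = w.length + 1 := by
  simp [ins]; omega

lemma getD_ins_lt (w : List Bool) (j p : ℕ) (hp : p < j) (hj : j ≤ w.length) (d : Bool) :
    (ins w j).getD p d = w.getD p d := by
  rw [ins, getD_append _ _ _ _ (by simp; try omega)]
  rw [getD_eq_getElem _ _ (by simp; try omega), getD_eq_getElem _ _ (by omega), getElem_take]

lemma getD_ins_self (w : List Bool) (j : ℕ) (hj : j ≤ w.length) (d : Bool) :
    (ins w j).getD j d = true := by
  rw [ins, getD_append_right _ _ _ _ (by simp; try omega)]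
  have : j - (w.take j).length = 0 := by simp; omega
  rw [this]; rfl

lemma getD_ins_succ (w : List Bool) (j : ℕ) (hj : j ≤ w.length) (d : Bool) :
    (ins w j).getD (j+1) d = false := by
  rw [ins, getD_append_right _ _ _ _ (by simp; try omega)]
  have : j + 1 - (w.take j).length = 1 := by simp; omega
  rw [this]; rfl

lemma getD_ins_ge (w : List Bool) (j p : ℕ) (hp : j + 2 ≤ p) (hj : j ≤ w.length)
    (hpw : p ≤ w.length) (d : Bool) :
    (ins w j).getD p d = w.getD (p-1) d := by
  rw [ins, getD_append_right _ _ _ _ (by simp; try omega)]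
  have h1 : p - (w.take j).length = (p - j - 2) + 1 + 1 := by simp; omega
  rw [h1, getD_cons_succ, getD_cons_succ]
  rcases Nat.lt_or_ge (p-1) w.length with h | h
  · rw [getD_eq_getElem _ _ (by simp; try omega), getD_eq_getElem _ _ (by omega), getElem_drop]
    congr 1; omega
  · rw [getD_eq_default _ _ (by simp; try omega), getD_eq_default _ _ (by omega)]

/-- reconstruct `w` from `ins w i = u`. -/
lemma ins_inv (w : List Bool) (i : ℕ) (hi : i < w.length) (d : Bool) :
    w = (ins w i).take i ++ w.getD i d :: (ins w i).drop (i+2) := by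
  have h1 : (ins w i).take i = w.take i := by
    rw [ins, take_append_of_le_length (by simp; try omega)]
    rw [take_take]; congr 1; omega
  have h2 : (ins w i).drop (i+2) = w.drop (i+1) := by
    rw [ins]
    have : i + 2 = (w.take i).length + 2 := by simp; omega
    rw [this, drop_length_add_append]
    rfl
  rw [h1, h2, getD_eq_getElem _ _ hi]
  conv_lhs => rw [← take_append_drop i w]
  congr 1
  rw [drop_eq_getElem_cons (by omega)]

lemma split_first_false (v : List Bool) (hv : false ∈ v) :
    ∃ m Y, v = replicate m true ++ false :: Y := by
  induction v with
  | nil => simp at hv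
  | cons b v' ih =>
    cases b with
    | false => exact ⟨0, v', rfl⟩
    | true =>
      have : false ∈ v' := by simpa using hv
      obtain ⟨m, Y, h⟩ := ih this
      exact ⟨m+1, Y, by simp [h, replicate_succ]⟩

lemma split_last_true (v : List Bool) (hv : true ∈ v) :
    ∃ X r, v = X ++ true :: replicate r false := by
  induction v with
  | nil => simp at hv
  | cons b v' ih =>
    by_cases h : true ∈ v'
    · obtain ⟨X, r, hx⟩ := ih h
      exact ⟨b :: X, r, by simp [hx]⟩
    · have hb : b = true := by rcases hv with _ | h'; rfl; exact absurd (by assumption) h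
      have : v' = replicate v'.length false := by
        apply eq_replicate_of_mem
        intro x hx
        cases x
        · rfl
        · exact absurd hx h
      exact ⟨[], v'.length, by simp [hb, ← this]⟩

lemma findIdx_not_rep (m : ℕ) (Y : List Bool) :
    findIdx (fun b => !b) (replicate m true ++ false :: Y) = m := by
  induction m with
  | zero => simp [findIdx_cons]
  | succ k ih => rw [replicate_succ, cons_append, findIdx_cons]; simp [ih]

lemma findIdx_id_rep (r : ℕ) (Z : List Bool) :
    findIdx (fun b => b) (replicate r false ++ true :: Z) = r := by
  induction r with
  | zero => simp [findIdx_cons]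
  | succ k ih => rw [replicate_succ, cons_append, findIdx_cons]; simp [ih]

lemma findIdx_id_rev (X : List Bool) (r : ℕ) :
    findIdx (fun b => b) ((X ++ true :: replicate r false).reverse) = r := by
  have : (X ++ true :: replicate r false).reverse
      = replicate r false ++ true :: X.reverse := by
    simp [reverse_append]
  rw [this, findIdx_id_rep]

lemma getD_drop' (l : List Bool) (m q : ℕ) (d : Bool) :
    (l.drop m).getD q d = l.getD (m+q) d := by
  rcases Nat.lt_or_ge q (l.drop m).length with h | h
  · rw [getD_eq_getElem _ _ h, getD_eq_getElem _ _ (by simp at h ⊢; omega), getElem_drop]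
  · rw [getD_eq_default _ _ h, getD_eq_default _ _ (by simp at h ⊢; omega)]

lemma getD_reverse' (l : List Bool) (q : ℕ) (h : q < l.length) (d : Bool) :
    l.reverse.getD q d = l.getD (l.length - 1 - q) d := by
  rw [getD_eq_getElem _ _ (by simpa using h), getD_eq_getElem _ _ (by omega), getElem_reverse]

lemma getD_take' (l : List Bool) (m q : ℕ) (h : q < m) (hq : q < l.length) (d : Bool) :
    (l.take m).getD q d = l.getD q d := by
  rw [getD_eq_getElem _ _ (by simp; try omega), getD_eq_getElem _ _ hq, getElem_take]

lemma findIdx_getD (p : Bool → Bool) (l : List Bool) (h : l.findIdx p < l.length) (d : Bool) :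
    p (l.getD (l.findIdx p) d) = true := by
  rw [getD_eq_getElem _ _ h]; exact findIdx_getElem (w := h)

lemma lt_findIdx_getD (p : Bool → Bool) (l : List Bool) (q : ℕ) (h : q < l.findIdx p)
    (hq : q < l.length) (d : Bool) : p (l.getD q d) = false := by
  rw [getD_eq_getElem _ _ hq]; exact not_of_lt_findIdx h

lemma getD_mem (l : List Bool) (q : ℕ) (h : q < l.length) (d : Bool) : l.getD q d ∈ l := by
  rw [getD_eq_getElem _ _ h]; exact getElem_mem h

lemma getD_eq_getD (l : List Bool) (q : ℕ) (h : q < l.length) (d d' : Bool) :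
    l.getD q d = l.getD q d' := by
  rw [getD_eq_getElem _ _ h, getD_eq_getElem _ _ h]

lemma target_branch (n : ℕ) (w : List Bool) (i : ℕ) (hw : w.length = n+1) (hn : 1 ≤ n)
    (h0 : w.getD 0 false = true) (hl : w.getD n true = false) (hi : i ≤ n) :
    (w.getD i true = true ∧ target w i < i ∧ w.getD (target w i) false = true ∧
       ∀ p, target w i < p → p < i → w.getD p true = false) ∨
    (w.getD i true = true ∧ i = 0 ∧ 0 < target w i ∧ target w i ≤ n ∧
       w.getD (target w i) true = false ∧ ∀ p < target w i, w.getD p false = true) ∨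
    (w.getD i true = false ∧ i < target w i ∧ target w i ≤ n ∧
       w.getD (target w i) true = false ∧ ∀ p, i < p → p < target w i → w.getD p false = true) ∨
    (w.getD i true = false ∧ i = n ∧ target w i < n ∧ w.getD (target w i) false = true ∧
       ∀ p, target w i < p → p ≤ n → w.getD p true = false) := by
  have hiw : i < w.length := by omega
  have hrl : ((w.take i).reverse).length = i := by simp; omega
  rcases Bool.dichotomy (w.getD i true) with hb | hb
  · -- w[i] = false : nextFalseIdx
    have htarget : target w i = nextFalseIdx w i := by rw [target, hb]; rfl
    set D := w.drop (i+1) with hD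
    have hDl : D.length = n - i := by rw [hD]; simp; omega
    set d := D.findIdx (fun b => !b) with hd
    have hDe : ∀ e d', D.getD e d' = w.getD (i+1+e) d' := fun e d' => getD_drop' w (i+1) e d'
    by_cases hdd : d < D.length
    · -- B3
      right; right; left
      have hj : target w i = i + 1 + d := by
        rw [htarget, nextFalseIdx, if_pos (by rw [← hD, ← hd]; exact hdd)]
      have hjf : w.getD (i+1+d) true = false := by
        rw [← hDe]
        have := findIdx_getD (fun b => !b) D (by omega) true
        rw [← hd] at this; simpa using this
      refine ⟨hb, by rw [hj]; omega, by rw [hj]; omega, by rw [hj]; exact hjf, ?_⟩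
      intro p hp1 hp2
      rw [hj] at hp2
      have := lt_findIdx_getD (fun b => !b) D (p - i - 1) (by omega) (by omega) false
      rw [hDe] at this
      have hpp : i + 1 + (p - i - 1) = p := by omega
      rw [hpp] at this
      simpa using this
    · -- B4
      have hin : i = n := by
        by_contra h
        have hlt : n - i - 1 < D.length := by omega
        have h2 : D.getD (n-i-1) true = false := by
          rw [hDe]
          have : i + 1 + (n - i - 1) = n := by omega
          rw [this]; exact hl
        have : d < D.length := by
          rw [hd]
          apply findIdx_lt_length_of_exists
          exact ⟨false, by rw [← h2]; exact getD_mem _ _ hlt _, rfl⟩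
        exact hdd this
      right; right; right
      set q' := w.reverse.findIdx (fun b => b) with hq'
      have hj : target w i = n - q' := by
        rw [htarget, nextFalseIdx, if_neg (by rw [← hD, ← hd]; exact hdd), hw, ← hq']
        omega
      have hq'lt : q' < n + 1 := by
        have : q' < w.reverse.length := by
          rw [hq']
          apply findIdx_lt_length_of_exists
          exact ⟨true, by rw [mem_reverse, ← h0]; exact getD_mem _ _ (by omega) _, rfl⟩
        simpa [hw] using this
      have hrev : ∀ q'' d', q'' < n + 1 → w.reverse.getD q'' d' = w.getD (n - q'') d' := by
        intro q'' d' h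
        rw [getD_reverse' _ _ (by omega), hw]
        congr 1
      have hjt : w.getD (n - q') false = true := by
        rw [← hrev _ _ hq'lt]
        have := findIdx_getD (fun b => b) w.reverse (by simp; try omega) false
        rw [← hq'] at this; exact this
      have hjn : n - q' < n := by
        rcases Nat.lt_or_ge (n - q') n with h | h
        · exact h
        · exfalso
          have he : n - q' = n := by omega
          rw [he, getD_eq_getD w n (by omega) false true, hl] at hjt
          exact Bool.false_ne_true hjt
      refine ⟨hb, hin, by rw [hj]; exact hjn, by rw [hj]; exact hjt, ?_⟩
      intro p hp1 hp2
      rw [hj] at hp1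
      have := lt_findIdx_getD (fun b => b) w.reverse (n - p) (by omega) (by simp; try omega) true
      rw [hrev _ _ (by omega)] at this
      have hpp : n - (n - p) = p := by omega
      rw [hpp] at this
      exact this
  · -- w[i] = true : prevTrueIdx
    have htarget : target w i = prevTrueIdx w i := by rw [target, hb]; rfl
    set q := ((w.take i).reverse).findIdx (fun b => b) with hq
    have hwq : ∀ q' d', q' < i → ((w.take i).reverse).getD q' d' = w.getD (i-1-q') d' := by
      intro q' d' hq'
      have htl : (w.take i).length = i := by simp; omega
      have h1 : q' < (w.take i).length := by rw [htl]; omega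
      rw [getD_reverse' _ _ h1, htl, getD_take' _ _ _ (by omega) (by omega)]
    by_cases hqi : q < i
    · -- B1
      left
      have hj : target w i = i - 1 - q := by
        rw [htarget, prevTrueIdx, if_pos (by rw [← hq]; exact hqi)]
      have hjt : w.getD (i-1-q) false = true := by
        rw [← hwq _ _ hqi]
        have := findIdx_getD (fun b => b) ((w.take i).reverse) (by omega) false
        rw [← hq] at this; exact this
      refine ⟨hb, by rw [hj]; omega, by rw [hj]; exact hjt, ?_⟩
      intro p hp1 hp2
      rw [hj] at hp1
      have := lt_findIdx_getD (fun b => b) ((w.take i).reverse) (i - 1 - p) (by omega) (by omega) true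
      rw [hwq _ _ (by omega)] at this
      have hpp : i - 1 - (i - 1 - p) = p := by omega
      rw [hpp] at this
      exact this
    · -- B2
      have hi0 : i = 0 := by
        by_contra h
        have htl : (w.take i).length = i := by simp; omega
        have h2 : (w.take i).getD 0 false = true := by
          rw [getD_take' _ _ _ (by omega) (by omega)]; exact h0
        have h1 : q < ((w.take i).reverse).length := by
          rw [hq]
          apply findIdx_lt_length_of_exists
          exact ⟨true, by rw [mem_reverse, ← h2]; exact getD_mem _ _ (by omega) _, rfl⟩
        rw [hrl] at h1; exact hqi h1
      right; left
      have hj : target w i = w.findIdx (fun b => !b) := by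
        rw [htarget, prevTrueIdx, if_neg (by rw [← hq]; exact hqi)]
      have hjlt : w.findIdx (fun b => !b) < w.length := by
        apply findIdx_lt_length_of_exists
        exact ⟨false, by rw [← hl]; exact getD_mem _ _ (by omega) _, rfl⟩
      have hjf : w.getD (w.findIdx (fun b => !b)) true = false := by
        have := findIdx_getD (fun b => !b) w hjlt true
        simpa using this
      have hjpos : 0 < w.findIdx (fun b => !b) := by
        by_contra h
        have h00 : w.findIdx (fun b => !b) = 0 := by omega
        rw [h00, getD_eq_getD w 0 (by omega) true false, h0] at hjf
        simp at hjf
      refine ⟨hb, hi0, by rw [hj]; omega, by rw [hj]; omega, by rw [hj]; exact hjf, ?_⟩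
      intro p hp
      rw [hj] at hp
      have := lt_findIdx_getD (fun b => !b) w p hp (by omega) false
      simpa using this

lemma ins_at (X Z : List Bool) (c : Bool) :
    ins (X ++ c :: Z) X.length = X ++ true :: false :: Z := by
  rw [ins]
  have h1 : (X ++ c :: Z).take X.length = X := take_left
  have h2 : (X ++ c :: Z).drop (X.length + 1) = Z := by
    rw [drop_length_add_append]; rfl
  rw [h1, h2]

lemma ins_inv' (w : List Bool) (i : ℕ) (u : List Bool) (d : Bool) (hi : i < w.length)
    (h : ins w i = u) : w = u.take i ++ w.getD i d :: u.drop (i+2) := by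
  rw [← h]; exact ins_inv w i hi d

lemma getD_true_of (w : List Bool) (q : ℕ) (h : w.getD q false = true) (d : Bool) :
    w.getD q d = true := by
  rcases Nat.lt_or_ge q w.length with hq | hq
  · rw [getD_eq_getD _ _ hq d false]; exact h
  · rw [getD_eq_default _ _ hq] at h; exact absurd h (by simp)

lemma getD_false_of (w : List Bool) (q : ℕ) (h : w.getD q true = false) (d : Bool) :
    w.getD q d = false := by
  rcases Nat.lt_or_ge q w.length with hq | hq
  · rw [getD_eq_getD _ _ hq d true]; exact h
  · rw [getD_eq_default _ _ hq] at h; exact absurd h (by simp)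

lemma rep_shift (m : ℕ) (a : Bool) (Z : List Bool) :
    replicate m a ++ a :: Z = a :: (replicate m a ++ Z) := by
  induction m with
  | zero => simp
  | succ k ih => rw [replicate_succ, cons_append, ih]; rfl

lemma ex_alpha (A w : List Bool)
    (h0 : w.getD 0 false = true)
    (hins : ins w 0 = true :: ((false :: A) ++ [false])) :
    ins w (target w 0) = true :: ((true :: A) ++ [false]) := by
  have hlen : 0 < w.length := by
    rcases w with _ | ⟨a, w'⟩
    · simp [ins] at hins
      try exact absurd (congrArg List.length hins.2) (by simp)
    · simp
  have hwe : w = true :: (A ++ [false]) := by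
    have h2 := ins_inv' w 0 _ false hlen hins
    rw [h0] at h2
    simpa using h2
  obtain ⟨m, Y, hsplit⟩ := split_first_false w (by rw [hwe]; simp)
  rcases m with _ | m'
  · rw [hsplit] at h0; simp at h0
  have htb : w.getD 0 true = true := getD_true_of w 0 h0 true
  have htarget : target w 0 = m' + 1 := by
    rw [target, htb, if_pos rfl, prevTrueIdx]
    simp only [take_zero, reverse_nil, findIdx_nil]
    simp only [Nat.lt_irrefl, if_false]
    rw [hsplit, findIdx_not_rep]
  have hkey : A ++ [false] = replicate m' true ++ false :: Y := by
    rw [hwe, replicate_succ] at hsplit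
    simpa using hsplit
  rw [htarget]
  have hia : ins (replicate (m'+1) true ++ false :: Y) (replicate (m'+1) (true : Bool)).length
      = replicate (m'+1) true ++ true :: false :: Y := ins_at _ _ _
  rw [length_replicate] at hia
  rw [hsplit, hia]
  have hg : (true :: ((true :: A) ++ [false]) : List Bool) = true :: true :: (A ++ [false]) := by simp
  rw [hg, hkey, replicate_succ, cons_append, rep_shift]

lemma ex_beta (n : ℕ) (A w : List Bool) (hA : A.length + 1 = n) (hw : w.length = n + 1)
    (hl : w.getD n true = false)
    (hins : ins w n = true :: ((A ++ [true]) ++ [false])) :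
    ins w (target w n) = true :: ((A ++ [false]) ++ [false]) := by
  have hu : (true :: ((A ++ [true]) ++ [false]) : List Bool) = (true :: A) ++ [true, false] := by
    simp
  rw [hu] at hins
  have hwe : w = (true :: A) ++ [false] := by
    have := ins_inv' w n ((true :: A) ++ [true, false]) true (by omega) hins
    have ht : ((true :: A) ++ [true, false]).take n = true :: A := by
      have : n = (true :: A).length := by simp; omega
      rw [this, take_left]
    have hd : ((true :: A) ++ [true, false]).drop (n+2) = [] := by
      apply drop_eq_nil_of_le; simp; omega
    rw [ht, hd, hl] at this
    exact this
  obtain ⟨X, r, hsplit⟩ := split_last_true w (by rw [hwe]; simp)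
  rcases r with _ | r'
  · exfalso
    have hn : n = X.length := by
      have := congrArg List.length hsplit
      rw [hw] at this; simp at this; omega
    have hxx : w.getD n true = true := by
      rw [hsplit, hn, getD_append_right _ _ _ _ (le_refl _), Nat.sub_self]
      rfl
    rw [hl] at hxx; simp at hxx
  have hfb : w.getD n false = false := getD_false_of w n hl false
  have hXlen : X.length + r' + 2 = n + 1 := by
    have := congrArg List.length hsplit
    rw [hw] at this; simp at this; omega
  have htarget : target w n = X.length := by
    rw [target, hl]
    simp only [Bool.false_eq_true, if_false]
    rw [nextFalseIdx]
    have hdrop : w.drop (n+1) = [] := by apply drop_eq_nil_of_le; omega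
    rw [hdrop]
    simp only [findIdx_nil, length_nil]
    simp only [Nat.lt_irrefl, if_false]
    rw [hw, hsplit, findIdx_id_rev]
    simp
    omega
  have hkey : true :: A = X ++ true :: replicate r' false := by
    have : w = (X ++ true :: replicate r' false) ++ [false] := by
      rw [hsplit, replicate_succ']; simp
    rw [hwe] at this
    have h2 := congrArg List.dropLast this
    rw [dropLast_concat, dropLast_concat] at h2
    exact h2
  rw [htarget, hsplit]
  have h3 : ins (X ++ true :: replicate (r'+1) false) X.length
      = X ++ true :: false :: replicate (r'+1) false := ins_at X _ true
  rw [h3]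
  have hg : (true :: ((A ++ [false]) ++ [false]) : List Bool) = (true :: A) ++ [false, false] := by
    simp
  rw [hg, hkey, append_assoc]
  congr 1
  rw [cons_append, replicate_succ]
  congr 2
  rw [rep_shift, rep_shift, append_nil]

lemma ex_bulk (n : ℕ) (A A' w : List Bool) (hL : A.length + 2 + A'.length = n)
    (hw : w.length = n+1)
    (hins : ins w (A.length+1) = true :: ((A ++ true :: false :: A') ++ [false])) :
    ins w (target w (A.length+1)) = true :: ((A ++ false :: true :: A') ++ [false]) := by
  set k := A.length + 1 with hk
  have hu : (true :: ((A ++ true :: false :: A') ++ [false]) : List Bool)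
      = (true :: A) ++ true :: false :: (A' ++ [false]) := by simp
  rw [hu] at hins
  have hgoal : (true :: ((A ++ false :: true :: A') ++ [false]) : List Bool)
      = (true :: A) ++ false :: true :: (A' ++ [false]) := by simp
  rw [hgoal]
  have hkA : k = (true :: A).length := by simp [hk]
  have hwe : w = (true :: A) ++ w.getD k false :: (A' ++ [false]) := by
    have := ins_inv' w k _ false (by omega) hins
    have ht : ((true :: A) ++ true :: false :: (A' ++ [false])).take k = true :: A := by
      rw [hkA, take_left]
    have hd : ((true :: A) ++ true :: false :: (A' ++ [false])).drop (k+2) = A' ++ [false] := by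
      rw [hkA]
      have : (true :: A).length + 2 = (true :: A).length + 2 := rfl
      rw [show (true :: A).length + 2 = (true :: A).length + 2 from rfl, drop_length_add_append]
      rfl
    rw [ht, hd] at this
    exact this
  rcases Bool.dichotomy (w.getD k false) with hb | hb
  · -- b = false : nextFalseIdx
    rw [hb] at hwe
    have hbt : w.getD k true = false := getD_false_of w k (by rw [hwe, hkA, getD_append_right _ _ _ _ (le_refl _)]; simp) true
    obtain ⟨m, Y, hsplit⟩ := split_first_false (A' ++ [false]) (by simp)
    have hmY : m + 1 + Y.length = A'.length + 1 := by
      have := congrArg List.length hsplit; simp at this; omega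
    have htarget : target w k = k + 1 + m := by
      rw [target, hbt]
      simp only [Bool.false_eq_true, if_false]
      rw [nextFalseIdx]
      have hdrop : w.drop (k+1) = A' ++ [false] := by
        rw [hwe, hkA, show (true :: A).length + 1 = (true :: A).length + 1 from rfl, drop_length_add_append]
        rfl
      rw [hdrop, hsplit, findIdx_not_rep, if_pos (by simp; try omega)]
    rw [htarget]
    have hwe2 : w = ((true :: A) ++ false :: replicate m true) ++ false :: Y := by
      rw [hwe, hsplit]; simp
    have hlen2 : k + 1 + m = ((true :: A) ++ false :: replicate m true).length := by
      simp [hk]; omega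
    rw [hwe2, hlen2, ins_at]
    rw [hsplit]
    simp only [append_assoc, cons_append]
    congr 3
    rw [rep_shift]
  · -- b = true : prevTrueIdx
    rw [hb] at hwe
    have hbt : w.getD k true = true := getD_true_of w k (by rw [hwe, hkA, getD_append_right _ _ _ _ (le_refl _)]; simp) true
    obtain ⟨X, r, hsplit⟩ := split_last_true (true :: A) (by simp)
    have hXr : X.length + 1 + r = k := by
      have := congrArg List.length hsplit; simp at this; simp [hk]; omega
    have htake : w.take k = true :: A := by
      rw [hwe, hkA, take_left]
    have htarget : target w k = X.length := by
      rw [target, hbt, if_pos rfl, prevTrueIdx, htake, hsplit, findIdx_id_rev]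
      rw [if_pos (by omega)]
      omega
    rw [htarget]
    have hwe2 : w = X ++ true :: (replicate r false ++ true :: (A' ++ [false])) := by
      rw [hwe, hsplit]; simp
    rw [hwe2, ins_at, hsplit]
    simp only [append_assoc, cons_append]
    congr 2
    rw [rep_shift]

lemma patt0 (L : List Bool) (d : Bool) : (true :: (L ++ [false])).getD 0 d = true := rfl

lemma patt_mid (L : List Bool) (p : ℕ) (h1 : 1 ≤ p) (h2 : p ≤ L.length) (d : Bool) :
    (true :: (L ++ [false])).getD p d = L.getD (p-1) d := by
  rcases p with _ | m
  · omega
  · rw [getD_cons_succ, getD_append _ _ _ _ (by omega)]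
    congr 1

lemma uni_alpha (n : ℕ) (A w : List Bool) (i : ℕ) (hA : A.length + 1 = n)
    (hw : w.length = n+1) (hn : 1 ≤ n) (h0 : w.getD 0 false = true)
    (hl : w.getD n true = false) (hi : i ≤ n)
    (hins : ins w i = true :: ((false :: A) ++ [false]))
    (htg : ins w (target w i) = true :: ((true :: A) ++ [false])) : i = 0 := by
  have hui : (true :: ((false :: A) ++ [false])).getD i false = true := by
    rw [← hins]; exact getD_ins_self w i (by omega) false
  have endgame : (true :: ((true :: A) ++ [false])).getD i false = false → False := by
    intro hu'i
    rcases i with _ | m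
    · rw [patt0] at hu'i; exact absurd hu'i (by simp)
    rcases m with _ | m'
    · rw [patt_mid (false :: A) 1 (by omega) (by simp; try omega)] at hui
      exact absurd hui (by simp)
    · rw [patt_mid (false :: A) (m'+2) (by omega) (by simp; try omega)] at hui
      rw [patt_mid (true :: A) (m'+2) (by omega) (by simp; try omega)] at hu'i
      rw [show m'+2-1 = m'+1 from rfl] at hui hu'i
      rw [getD_cons_succ] at hui hu'i
      rw [hui] at hu'i; exact absurd hu'i (by simp)
  set j := target w i with hjdef
  rcases target_branch n w i hw hn h0 hl hi with ⟨hbt, hji, hjt, hzone⟩ |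
    ⟨_, hi0, _⟩ | ⟨hbf, hij, hjn, hjt, hzone⟩ | ⟨hbf, hin, hjn, hjt, hzone⟩
  · -- B1
    exfalso; apply endgame
    rw [← htg]
    rcases Nat.lt_or_ge (j+1) i with h | h
    · rw [getD_ins_ge w j i (by omega) (by omega) (by omega)]
      exact getD_false_of _ _ (hzone (i-1) (by omega) (by omega)) false
    · have hii : i = j + 1 := by omega
      rw [hii]; exact getD_ins_succ w j (by omega) false
  · exact hi0
  · -- B3
    exfalso; apply endgame
    rw [← htg, getD_ins_lt w j i hij (by omega) false]
    exact getD_false_of _ _ hbf false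
  · -- B4
    exfalso; apply endgame
    rw [← htg]
    rcases Nat.lt_or_ge (j+1) i with h | h
    · rw [getD_ins_ge w j i (by omega) (by omega) (by omega)]
      exact getD_false_of _ _ (hzone (i-1) (by omega) (by omega)) false
    · have hii : i = j + 1 := by omega
      rw [hii]; exact getD_ins_succ w j (by omega) false

lemma uni_beta (n : ℕ) (A w : List Bool) (i : ℕ) (hA : A.length + 1 = n)
    (hw : w.length = n+1) (hn : 1 ≤ n) (h0 : w.getD 0 false = true)
    (hl : w.getD n true = false) (hi : i ≤ n)
    (hins : ins w i = true :: ((A ++ [true]) ++ [false]))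
    (htg : ins w (target w i) = true :: ((A ++ [false]) ++ [false])) : i = n := by
  have hui : (true :: ((A ++ [true]) ++ [false])).getD i false = true := by
    rw [← hins]; exact getD_ins_self w i (by omega) false
  have endgame : (true :: ((A ++ [false]) ++ [false])).getD i false = false → i = n := by
    intro hu'i
    rcases i with _ | m
    · rw [patt0] at hu'i; exact absurd hu'i (by simp)
    by_cases hmn : m + 1 = n
    · exact hmn
    · exfalso
      rw [patt_mid (A ++ [true]) (m+1) (by omega) (by simp; try omega)] at hui
      rw [patt_mid (A ++ [false]) (m+1) (by omega) (by simp; try omega)] at hu'i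
      rw [getD_append _ _ _ _ (by omega)] at hui
      rw [getD_append _ _ _ _ (by omega)] at hu'i
      rw [hui] at hu'i; exact absurd hu'i (by simp)
  set j := target w i with hjdef
  rcases target_branch n w i hw hn h0 hl hi with ⟨hbt, hji, hjt, hzone⟩ |
    ⟨_, hi0, hj0, hjn, hjt, hzone⟩ | ⟨hbf, hij, hjn, hjt, hzone⟩ | ⟨hbf, hin, hjn, hjt, hzone⟩
  · -- B1
    apply endgame
    rw [← htg]
    rcases Nat.lt_or_ge (j+1) i with h | h
    · rw [getD_ins_ge w j i (by omega) (by omega) (by omega)]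
      exact getD_false_of _ _ (hzone (i-1) (by omega) (by omega)) false
    · have hii : i = j + 1 := by omega
      rw [hii]; exact getD_ins_succ w j (by omega) false
  · -- B2 : i = 0, contradiction
    exfalso
    subst hi0
    have hui1 : (true :: ((A ++ [true]) ++ [false])).getD 1 false = false := by
      rw [← hins]; exact getD_ins_succ w 0 (by omega) false
    have hu'1 : (true :: ((A ++ [false]) ++ [false])).getD 1 false = true := by
      rw [← htg]
      rcases Nat.lt_or_ge 1 j with h | h
      · rw [getD_ins_lt w j 1 h (by omega) false]
        exact getD_true_of _ _ (hzone 1 h) false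
      · have hjj : j = 1 := by omega
        rw [hjj]
        exact getD_ins_self w 1 (by omega) false
    rcases A with _ | ⟨a, A'⟩
    · rw [patt_mid ([] ++ [true]) 1 (by omega) (by simp)] at hui1
      exact absurd hui1 (by simp)
    · rw [patt_mid ((a :: A') ++ [true]) 1 (by omega) (by simp)] at hui1
      rw [patt_mid ((a :: A') ++ [false]) 1 (by omega) (by simp)] at hu'1
      rw [getD_append _ _ _ _ (by simp)] at hui1 hu'1
      rw [hui1] at hu'1; exact absurd hu'1 (by simp)
  · -- B3
    apply endgame
    rw [← htg, getD_ins_lt w j i hij (by omega) false]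
    exact getD_false_of _ _ hbf false
  · exact hin

lemma bulk_agree (A A' : List Bool) (p : ℕ) (d : Bool) (h1 : p ≠ A.length+1) (h2 : p ≠ A.length+2) :
    (true :: ((A ++ true :: false :: A') ++ [false])).getD p d
      = (true :: ((A ++ false :: true :: A') ++ [false])).getD p d := by
  have e1 : ((A ++ true :: false :: A') ++ [false]) = A ++ true :: false :: (A' ++ [false]) := by
    simp
  have e2 : ((A ++ false :: true :: A') ++ [false]) = A ++ false :: true :: (A' ++ [false]) := by
    simp
  rw [e1, e2]
  rcases p with _ | q
  · rfl
  · rw [getD_cons_succ, getD_cons_succ]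
    rcases Nat.lt_or_ge q A.length with h | h
    · rw [getD_append _ _ _ _ h, getD_append _ _ _ _ h]
    · have hq : q - A.length = (q - A.length - 2) + 2 := by omega
      rw [getD_append_right _ _ _ _ h, getD_append_right _ _ _ _ h, hq]
      rfl

lemma bulk_patt_k (A A' : List Bool) (d : Bool) :
    (true :: ((A ++ true :: false :: A') ++ [false])).getD (A.length+1) d = true := by
  have e1 : ((A ++ true :: false :: A') ++ [false]) = A ++ true :: false :: (A' ++ [false]) := by
    simp
  rw [e1, getD_cons_succ, getD_append_right _ _ _ _ (le_refl _), Nat.sub_self]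
  rfl

lemma bulk_patt_k1 (A A' : List Bool) (d : Bool) :
    (true :: ((A ++ true :: false :: A') ++ [false])).getD (A.length+2) d = false := by
  have e1 : ((A ++ true :: false :: A') ++ [false]) = A ++ true :: false :: (A' ++ [false]) := by
    simp
  rw [e1, getD_cons_succ, getD_append_right _ _ _ _ (by omega)]
  have : A.length + 1 - A.length = 1 := by omega
  rw [this]
  rfl

lemma uni_bulk (n : ℕ) (A A' w : List Bool) (i : ℕ) (hL : A.length + 2 + A'.length = n)
    (hw : w.length = n+1) (hn : 1 ≤ n) (h0 : w.getD 0 false = true)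
    (hl : w.getD n true = false) (hi : i ≤ n)
    (hins : ins w i = true :: ((A ++ true :: false :: A') ++ [false]))
    (htg : ins w (target w i) = true :: ((A ++ false :: true :: A') ++ [false])) :
    i = A.length + 1 := by
  have hui : (true :: ((A ++ true :: false :: A') ++ [false])).getD i false = true := by
    rw [← hins]; exact getD_ins_self w i (by omega) false
  have endgame : (true :: ((A ++ false :: true :: A') ++ [false])).getD i false = false →
      i = A.length + 1 := by
    intro hu'i
    by_cases h1 : i = A.length + 1
    · exact h1
    by_cases h2 : i = A.length + 2
    · exfalso; rw [h2, bulk_patt_k1] at hui; exact absurd hui (by simp)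
    · exfalso
      rw [bulk_agree A A' i false h1 h2, hu'i] at hui
      exact absurd hui (by simp)
  set j := target w i with hjdef
  rcases target_branch n w i hw hn h0 hl hi with ⟨hbt, hji, hjt, hzone⟩ |
    ⟨_, hi0, hj0, hjn, hjt, hzone⟩ | ⟨hbf, hij, hjn, hjt, hzone⟩ | ⟨hbf, hin, hjn, hjt, hzone⟩
  · -- B1
    apply endgame
    rw [← htg]
    rcases Nat.lt_or_ge (j+1) i with h | h
    · rw [getD_ins_ge w j i (by omega) (by omega) (by omega)]
      exact getD_false_of _ _ (hzone (i-1) (by omega) (by omega)) false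
    · have hii : i = j + 1 := by omega
      rw [hii]; exact getD_ins_succ w j (by omega) false
  · -- B2 : i = 0
    exfalso
    subst hi0
    have hui1 : (true :: ((A ++ true :: false :: A') ++ [false])).getD 1 false = false := by
      rw [← hins]; exact getD_ins_succ w 0 (by omega) false
    have hu'1 : (true :: ((A ++ false :: true :: A') ++ [false])).getD 1 false = true := by
      rw [← htg]
      rcases Nat.lt_or_ge 1 j with h | h
      · rw [getD_ins_lt w j 1 h (by omega) false]
        exact getD_true_of _ _ (hzone 1 h) false
      · have hjj : j = 1 := by omega
        rw [hjj]
        exact getD_ins_self w 1 (by omega) false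
    by_cases hk1 : A.length + 1 = 1
    · have hA0 : A.length = 0 := by omega
      rw [show (1:ℕ) = A.length + 1 from by omega, bulk_patt_k] at hui1
      exact absurd hui1 (by simp)
    · rw [bulk_agree A A' 1 false (by omega) (by omega), hu'1] at hui1
      exact absurd hui1 (by simp)
  · -- B3
    apply endgame
    rw [← htg]
    rcases Nat.lt_or_ge (i+1) j with h | h
    · rw [getD_ins_lt w j i (by omega) (by omega) false]
      exact getD_false_of _ _ hbf false
    · rw [getD_ins_lt w j i (by omega) (by omega) false]
      exact getD_false_of _ _ hbf false
  · -- B4 : i = n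
    exfalso
    have hu'n : (true :: ((A ++ false :: true :: A') ++ [false])).getD i false = false := by
      rw [← htg]
      rcases Nat.lt_or_ge (j+1) i with h | h
      · rw [getD_ins_ge w j i (by omega) (by omega) (by omega)]
        exact getD_false_of _ _ (hzone (i-1) (by omega) (by omega)) false
      · have hii : i = j + 1 := by omega
        rw [hii]; exact getD_ins_succ w j (by omega) false
    have := endgame hu'n
    omega

lemma patt_last (L : List Bool) (d : Bool) :
    (true :: (L ++ [false])).getD (L.length+1) d = false := by
  rw [getD_cons_succ, getD_append_right _ _ _ _ (le_refl _), Nat.sub_self]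
  rfl

lemma target_le (n : ℕ) (w : List Bool) (i : ℕ) (hw : w.length = n+1) (hn : 1 ≤ n)
    (h0 : w.getD 0 false = true) (hl : w.getD n true = false) (hi : i ≤ n) :
    target w i ≤ n := by
  rcases target_branch n w i hw hn h0 hl hi with ⟨-, h, -, -⟩ |
    ⟨-, -, -, h, -⟩ | ⟨-, -, h, -⟩ | ⟨-, -, h, -⟩ <;> omega

open List

namespace PTree

lemma numLeaves_pos (T : PTree) : 1 ≤ T.numLeaves := by
  induction T with
  | leaf => simp [numLeaves]
  | node l r ihl ihr => simp [numLeaves]; omega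

lemma length_dirsAux (T : PTree) (b : Bool) : (dirsAux T b).length = T.numLeaves := by
  induction T generalizing b with
  | leaf => rfl
  | node l r ihl ihr => simp [dirsAux, numLeaves, ihl, ihr]

lemma dirsAux_shape (T : PTree) (b : Bool) :
    dirsAux T b = [b] ∨ ∃ Y, dirsAux T b = true :: (Y ++ [false]) := by
  induction T generalizing b with
  | leaf => left; rfl
  | node l r ihl ihr =>
    right
    rcases ihl true with hl | ⟨Y1, hl⟩ <;> rcases ihr false with hr | ⟨Y2, hr⟩
    · exact ⟨[], by simp [dirsAux, hl, hr]⟩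
    · exact ⟨true :: Y2, by simp [dirsAux, hl, hr]⟩
    · exact ⟨Y1 ++ [false], by simp [dirsAux, hl, hr]⟩
    · exact ⟨Y1 ++ [false] ++ true :: Y2, by simp [dirsAux, hl, hr]⟩

lemma dirs_node (l r : PTree) (b : Bool) : dirs (node l r) = dirsAux (node l r) b := rfl

lemma dirs_shape (l r : PTree) : ∃ Y, dirs (node l r) = true :: (Y ++ [false]) := by
  rcases dirsAux_shape (node l r) true with h | h
  · exfalso
    have := congrArg List.length h
    rw [length_dirsAux] at this
    simp [numLeaves] at this
    have h1 := numLeaves_pos l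
    have h2 := numLeaves_pos r
    omega
  · rw [dirs_node l r true]; exact h

lemma length_dirs_node (l r : PTree) : (dirs (node l r)).length = (node l r).numLeaves := by
  rw [dirs_node l r true, length_dirsAux]

lemma node_of_numLeaves (T : PTree) (h : 2 ≤ T.numLeaves) : ∃ l r, T = node l r := by
  cases T with
  | leaf => simp [numLeaves] at h
  | node l r => exact ⟨l, r, rfl⟩

lemma red_of_shape (T : PTree) (Y : List Bool) (h : dirs T = true :: (Y ++ [false])) :
    red T = Y := by
  rw [red, h]
  simp [dropLast_concat]

lemma dirsAux_true_head (T : PTree) (d : Bool) : (dirsAux T true).getD 0 d = true := by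
  induction T with
  | leaf => rfl
  | node l r ihl ihr =>
    rw [dirsAux, getD_append _ _ _ _ (by rw [length_dirsAux]; exact numLeaves_pos l)]
    exact ihl

lemma dirsAux_node_last (l r : PTree) (b d : Bool) :
    (dirsAux (node l r) b).getD ((dirsAux (node l r) b).length - 1) d = false := by
  rcases dirsAux_shape (node l r) b with h | ⟨Y, h⟩
  · exfalso
    have := congrArg List.length h
    rw [length_dirsAux] at this
    simp [numLeaves] at this
    have h1 := numLeaves_pos l
    have h2 := numLeaves_pos r
    omega
  · rw [h]
    have e : (true :: (Y ++ [false])).length - 1 = Y.length + 1 := by simp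
    rw [e, getD_cons_succ, getD_append_right _ _ _ _ (le_refl _), Nat.sub_self]
    rfl

end PTree

namespace MTree

lemma forget_shape (M : MTree) : ∃ a b, M.forget = PTree.node a b := by
  cases M with
  | mark => exact ⟨_, _, rfl⟩
  | nodeL l r => exact ⟨_, _, rfl⟩
  | nodeR l r => exact ⟨_, _, rfl⟩

lemma numLeaves_forget (M : MTree) :
    M.forget.numLeaves = M.collapseT.numLeaves + 1 := by
  induction M with
  | mark => rfl
  | nodeL l r ih => simp [forget, collapseT, PTree.numLeaves, ih]; omega
  | nodeR l r ih => simp [forget, collapseT, PTree.numLeaves, ih]; omega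

lemma markIdx_lt (M : MTree) : M.markIdx < M.collapseT.numLeaves := by
  induction M with
  | mark => simp [markIdx, collapseT, PTree.numLeaves]
  | nodeL l r ih =>
    simp [markIdx, collapseT, PTree.numLeaves]
    have := (PTree.numLeaves_pos r); omega
  | nodeR l r ih =>
    simp [markIdx, collapseT, PTree.numLeaves]
    omega

lemma expand_collapse (M : MTree) : expand M.collapseT M.markIdx = M := by
  induction M with
  | mark => rfl
  | nodeL l r ih =>
    have h := markIdx_lt l
    simp only [collapseT, markIdx, expand]
    rw [if_pos h, ih]
  | nodeR l r ih =>
    show expand (PTree.node l r.collapseT) (l.numLeaves + r.markIdx) = _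
    simp only [expand]
    rw [if_neg (by omega)]
    rw [show l.numLeaves + r.markIdx - l.numLeaves = r.markIdx from by omega, ih]

end MTree

lemma ins_append_left (L R : List Bool) (i : ℕ) (h : i < L.length) :
    ins (L ++ R) i = ins L i ++ R := by
  rw [ins, ins, take_append_of_le_length (by omega), drop_append_of_le_length (by omega)]
  simp

lemma ins_append_right (L R : List Bool) (i : ℕ) (h : L.length ≤ i) :
    ins (L ++ R) i = L ++ ins R (i - L.length) := by
  rw [ins, ins]
  have e1 : i = L.length + (i - L.length) := by omega
  conv_lhs => rw [e1]
  rw [take_length_add_append]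
  have e2 : L.length + (i - L.length) + 1 = L.length + ((i - L.length) + 1) := by omega
  rw [e2, drop_length_add_append]
  simp

lemma dirsAux_forget_expand (T : PTree) (i : ℕ) (b : Bool) (h : i < T.numLeaves) :
    PTree.dirsAux (expand T i).forget b = ins (PTree.dirsAux T b) i := by
  induction T generalizing i b with
  | leaf =>
    have : i = 0 := by simp [PTree.numLeaves] at h; omega
    subst this
    simp [expand, MTree.forget, PTree.dirsAux, ins]
  | node l r ihl ihr =>
    by_cases hi : i < l.numLeaves
    · rw [expand, if_pos hi]
      show PTree.dirsAux (expand l i).forget true ++ PTree.dirsAux r false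
          = ins (PTree.dirsAux l true ++ PTree.dirsAux r false) i
      rw [ins_append_left _ _ _ (by rw [PTree.length_dirsAux]; omega), ihl i true hi]
    · rw [expand, if_neg hi]
      show PTree.dirsAux l true ++ PTree.dirsAux (expand r (i - l.numLeaves)).forget false
          = ins (PTree.dirsAux l true ++ PTree.dirsAux r false) i
      have hr : i - l.numLeaves < r.numLeaves := by simp [PTree.numLeaves] at h; omega
      rw [ins_append_right _ _ _ (by rw [PTree.length_dirsAux]; omega),
        ihr _ false hr, PTree.length_dirsAux]

lemma dirs_forget (M : MTree) : (M.forget).dirs = PTree.dirsAux M.forget true := by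
  obtain ⟨a, b, h⟩ := MTree.forget_shape M
  rw [h]
  rfl

lemma dirs_forget_expand (T : PTree) (i : ℕ) (h : i < T.numLeaves) :
    (expand T i).forget.dirs = ins T.dirs i := by
  cases T with
  | leaf =>
    have : i = 0 := by simp [PTree.numLeaves] at h; omega
    subst this
    simp [expand, MTree.forget, PTree.dirs, PTree.dirsAux, ins]
  | node l r =>
    rw [dirs_forget, dirsAux_forget_expand _ _ _ h, PTree.dirs_node l r true]

/-- place the mark at the last branching vertex whose leaves are at positions k, k+1 -/
def markAt : PTree → ℕ → MTree
  | .leaf, _ => .mark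
  | .node l r, k =>
    if l = .leaf ∧ r = .leaf then .mark
    else if k < l.numLeaves then .nodeL (markAt l k) r
    else .nodeR l (markAt r (k - l.numLeaves))

lemma markAt_spec (T : PTree) (b : Bool) (k : ℕ)
    (h1 : (PTree.dirsAux T b).getD k false = true)
    (h2 : (PTree.dirsAux T b).getD (k+1) true = false) :
    (markAt T k).forget = T ∧ (markAt T k).markIdx = k := by
  induction T generalizing b k with
  | leaf =>
    exfalso
    have : (PTree.dirsAux .leaf b).getD (k+1) true = true := by
      rw [getD_eq_default]
      simp [PTree.dirsAux]
    rw [h2] at this; exact absurd this (by simp)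
  | node l r ihl ihr =>
    by_cases hlr : l = .leaf ∧ r = .leaf
    · obtain ⟨hl, hr⟩ := hlr
      subst hl; subst hr
      have hk : k = 0 := by
        by_contra hk0
        have : (PTree.dirsAux (PTree.node .leaf .leaf) b).getD k false = false := by
          show ([true, false] : List Bool).getD k false = false
          rcases k with _ | k1
          · omega
          rcases k1 with _ | k2
          · rfl
          · rw [getD_eq_default]; simp
        rw [h1] at this; exact absurd this (by simp)
      subst hk
      rw [markAt]
      exact ⟨rfl, rfl⟩
    · have hL : (PTree.dirsAux l true).length = l.numLeaves := PTree.length_dirsAux l true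
      have hd : PTree.dirsAux (PTree.node l r) b
          = PTree.dirsAux l true ++ PTree.dirsAux r false := rfl
      rcases Nat.lt_or_ge (k+1) l.numLeaves with hk | hk
      · -- inside left
        rw [hd, getD_append _ _ _ _ (by omega)] at h1
        rw [hd, getD_append _ _ _ _ (by omega)] at h2
        obtain ⟨hf, hm⟩ := ihl true k h1 h2
        rw [markAt, if_neg hlr, if_pos (by omega)]
        exact ⟨by rw [MTree.forget, hf], by rw [MTree.markIdx, hm]⟩
      · rcases Nat.lt_or_ge k l.numLeaves with hk2 | hk2
        · -- straddling : k+1 = numLeaves l, impossible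
          exfalso
          have hkl : k + 1 = l.numLeaves := by omega
          cases l with
          | leaf =>
            -- k = 0, h2 is head of dirsAux r false, r is a node
            have hk0 : k = 0 := by simp [PTree.numLeaves] at hkl; omega
            subst hk0
            have hrn : r ≠ .leaf := fun h => hlr ⟨rfl, h⟩
            obtain ⟨r1, r2, hr⟩ := PTree.node_of_numLeaves r (by
              cases r with
              | leaf => exact absurd rfl hrn
              | node a c =>
                have := PTree.numLeaves_pos a
                have := PTree.numLeaves_pos c
                simp [PTree.numLeaves]; omega)
            rw [hd, getD_append_right _ _ _ _ (by simp [PTree.dirsAux])] at h2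
            have e : 0 + 1 - (PTree.dirsAux .leaf true).length = 0 := by simp [PTree.dirsAux]
            rw [e, hr] at h2
            have : (PTree.dirsAux (PTree.node r1 r2) false).getD 0 true = true := by
              show (PTree.dirsAux r1 true ++ PTree.dirsAux r2 false).getD 0 true = true
              rw [getD_append _ _ _ _ (by rw [PTree.length_dirsAux]; exact PTree.numLeaves_pos r1)]
              exact PTree.dirsAux_true_head r1 true
            rw [h2] at this; exact absurd this (by simp)
          | node l1 l2 =>
            -- last letter of dirsAux (node l1 l2) true is false, contradicting h1
            rw [hd, getD_append _ _ _ _ (by rw [PTree.length_dirsAux]; omega)] at h1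
            have : (PTree.dirsAux (PTree.node l1 l2) true).getD k false = false := by
              have e : k = (PTree.dirsAux (PTree.node l1 l2) true).length - 1 := by
                rw [PTree.length_dirsAux]; omega
              rw [e]; exact PTree.dirsAux_node_last l1 l2 true false
            rw [h1] at this; exact absurd this (by simp)
        · -- inside right
          rw [hd, getD_append_right _ _ _ _ (by omega)] at h1
          rw [hd, getD_append_right _ _ _ _ (by omega)] at h2
          rw [hL] at h1 h2
          have e : k + 1 - l.numLeaves = (k - l.numLeaves) + 1 := by omega
          rw [e] at h2
          obtain ⟨hf, hm⟩ := ihr false (k - l.numLeaves) h1 h2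
          rw [markAt, if_neg hlr, if_neg (by omega)]
          refine ⟨by rw [MTree.forget, hf], ?_⟩
          rw [MTree.markIdx, hm]
          omega

lemma markAt_forget_markIdx (M : MTree) : markAt M.forget M.markIdx = M := by
  induction M with
  | mark => rfl
  | nodeL l r ih =>
    obtain ⟨a, b, hab⟩ := MTree.forget_shape l
    have h1 : ¬(l.forget = .leaf ∧ r = .leaf) := by rw [hab]; rintro ⟨h, -⟩; cases h
    have h2 : l.markIdx < l.forget.numLeaves := by
      have := MTree.markIdx_lt l
      have := MTree.numLeaves_forget l
      omega
    show markAt (.node l.forget r) l.markIdx = _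
    rw [markAt, if_neg h1, if_pos h2, ih]
  | nodeR l r ih =>
    obtain ⟨a, b, hab⟩ := MTree.forget_shape r
    have h1 : ¬(l = .leaf ∧ r.forget = .leaf) := by rw [hab]; rintro ⟨-, h⟩; cases h
    show markAt (.node l r.forget) (l.numLeaves + r.markIdx) = _
    rw [markAt, if_neg h1, if_neg (by omega)]
    have e : l.numLeaves + r.markIdx - l.numLeaves = r.markIdx := by omega
    rw [e, ih]


lemma unpack (n : ℕ) (hn : 1 ≤ n) (C' : List Bool) (M : MTree)
    (h1 : M.forget.numLeaves = n+2) (h2 : M.forget.red = C') :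
    (M.collapseT.dirs).length = n+1 ∧
    (M.collapseT.dirs).getD 0 false = true ∧
    (M.collapseT.dirs).getD n true = false ∧
    M.markIdx ≤ n ∧
    ins M.collapseT.dirs M.markIdx = true :: (C' ++ [false]) ∧
    ∀ C : List Bool,
      ((piM M).forget.red = C ↔
        ins M.collapseT.dirs (target M.collapseT.dirs M.markIdx) = true :: (C ++ [false])) := by
  have hc : M.collapseT.numLeaves = n+1 := by have := MTree.numLeaves_forget M; omega
  obtain ⟨l0, r0, hT0⟩ := PTree.node_of_numLeaves M.collapseT (by omega)
  have hwlen : M.collapseT.dirs.length = n+1 := by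
    rw [hT0, PTree.length_dirs_node, ← hT0, hc]
  obtain ⟨Y, hY⟩ := PTree.dirs_shape l0 r0
  rw [← hT0] at hY
  have hYlen : Y.length + 2 = n + 1 := by rw [hY] at hwlen; simpa using hwlen
  have h0 : M.collapseT.dirs.getD 0 false = true := by rw [hY]; rfl
  have hlast : M.collapseT.dirs.getD n true = false := by
    rw [hY, show n = Y.length + 1 from by omega]
    exact patt_last Y true
  have hilt : M.markIdx < n+1 := hc ▸ MTree.markIdx_lt M
  have hu : (M.forget).dirs = ins M.collapseT.dirs M.markIdx := by
    conv_lhs => rw [← MTree.expand_collapse M]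
    exact dirs_forget_expand _ _ (by omega)
  obtain ⟨a, b, hab⟩ := MTree.forget_shape M
  obtain ⟨Y', hY'⟩ := PTree.dirs_shape a b
  rw [← hab] at hY'
  have hY'C : Y' = C' := by rw [← h2]; exact (PTree.red_of_shape _ _ hY').symm
  have hins : ins M.collapseT.dirs M.markIdx = true :: (C' ++ [false]) := by
    rw [← hu, hY', hY'C]
  refine ⟨hwlen, h0, hlast, by omega, hins, ?_⟩
  intro C
  have hjle : target M.collapseT.dirs M.markIdx ≤ n :=
    target_le n _ _ hwlen hn h0 hlast (by omega)
  have hpi : (piM M).forget.dirs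
      = ins M.collapseT.dirs (target M.collapseT.dirs M.markIdx) := by
    rw [piM]
    exact dirs_forget_expand _ _ (by omega)
  constructor
  · intro hred
    obtain ⟨a2, b2, hab2⟩ := MTree.forget_shape (piM M)
    obtain ⟨Y2, hY2⟩ := PTree.dirs_shape a2 b2
    rw [← hab2] at hY2
    have hY2C : Y2 = C := by rw [← hred]; exact (PTree.red_of_shape _ _ hY2).symm
    rw [← hpi, hY2, hY2C]
  · intro hins2
    exact PTree.red_of_shape _ _ (by rw [hpi, hins2])

lemma main_card (n : ℕ) (hn : 1 ≤ n) (C C' : List Bool) (hC : C.length = n)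
    (hC' : C'.length = n) (k : ℕ)
    (hd1 : (true :: (C' ++ [false])).getD k false = true)
    (hd2 : (true :: (C' ++ [false])).getD (k+1) true = false)
    (hex : ∀ w : List Bool, w.length = n+1 → w.getD 0 false = true → w.getD n true = false →
        ins w k = true :: (C' ++ [false]) → ins w (target w k) = true :: (C ++ [false]))
    (huni : ∀ (w : List Bool) (i : ℕ), w.length = n+1 → w.getD 0 false = true →
        w.getD n true = false → i ≤ n → ins w i = true :: (C' ++ [false]) →
        ins w (target w i) = true :: (C ++ [false]) → i = k) :
    Nat.card {M : MTree // M.forget.numLeaves = n + 2 ∧ M.forget.red = C' ∧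
        (piM M).forget.red = C}
      = Nat.card {T : PTree // T.numLeaves = n + 2 ∧ T.red = C'} := by
  have hinv : ∀ T : PTree, T.numLeaves = n+2 → T.red = C' →
      (markAt T k).forget = T ∧ (markAt T k).markIdx = k := by
    intro T hT1 hT2
    obtain ⟨l, r, hTn⟩ := PTree.node_of_numLeaves T (by omega)
    obtain ⟨Y, hY⟩ := PTree.dirs_shape l r
    rw [← hTn] at hY
    have hYC : Y = C' := by rw [← hT2]; exact (PTree.red_of_shape _ _ hY).symm
    have hda : PTree.dirsAux T true = true :: (C' ++ [false]) := by
      rw [hTn, ← PTree.dirs_node l r true, ← hTn, hY, hYC]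
    exact markAt_spec T true k (by rw [hda]; exact hd1) (by rw [hda]; exact hd2)
  have hmem : ∀ T : PTree, T.numLeaves = n+2 → T.red = C' →
      (markAt T k).forget.numLeaves = n + 2 ∧ (markAt T k).forget.red = C' ∧
        (piM (markAt T k)).forget.red = C := by
    intro T hT1 hT2
    obtain ⟨hf, hm⟩ := hinv T hT1 hT2
    refine ⟨by rw [hf]; exact hT1, by rw [hf]; exact hT2, ?_⟩
    obtain ⟨hw1, hw2, hw3, hi4, hins5, hiff⟩ :=
      unpack n hn C' (markAt T k) (by rw [hf]; exact hT1) (by rw [hf]; exact hT2)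
    rw [hiff C]
    rw [hm] at hins5 ⊢
    exact hex _ hw1 hw2 hw3 hins5
  apply Nat.card_congr
  refine ⟨fun M => ⟨M.1.forget, M.2.1, M.2.2.1⟩,
         fun T => ⟨markAt T.1 k, hmem T.1 T.2.1 T.2.2⟩, ?_, ?_⟩
  · intro M
    apply Subtype.ext
    show markAt M.1.forget k = M.1
    obtain ⟨hM1, hM2, hM3⟩ := M.2
    obtain ⟨hw1, hw2, hw3, hi4, hins5, hiff⟩ := unpack n hn C' M.1 hM1 hM2
    have hik : M.1.markIdx = k := huni _ _ hw1 hw2 hw3 hi4 hins5 ((hiff C).mp hM3)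
    rw [← hik]
    exact markAt_forget_markIdx M.1
  · intro T
    apply Subtype.ext
    exact (hinv T.1 T.2.1 T.2.2).1

end Aux

/-- if `W(C' → C) ≠ 0` then
`|F(C' → C)| = |(R∘f)^{-1}{C'} ∩ (R∘f∘π)^{-1}{C}| = |R^{-1}{C'}|`. -/
theorem flux_set_card (n : ℕ) (α β : ℝ) (hα : α ∈ Set.Ioc (0:ℝ) 1)
    (hβ : β ∈ Set.Ioc (0:ℝ) 1) (C C' : List Bool) (hC : C.length = n)
    (hC' : C'.length = n) (hW : rate α β C' C ≠ 0) :
    Nat.card {M : MTree // M.forget.numLeaves = n + 2 ∧ M.forget.red = C' ∧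
        (piM M).forget.red = C}
      = Nat.card {T : PTree // T.numLeaves = n + 2 ∧ T.red = C'} := by
  by_cases h1 : ∃ A, C' = false :: A ∧ C = true :: A
  · obtain ⟨A, hC'e, hCe⟩ := h1
    subst hC'e; subst hCe
    have hA : A.length + 1 = n := by simpa using hC'
    apply main_card n (by omega) _ _ hC hC' 0
    · rfl
    · rfl
    · intro w hw h0 hl hins
      exact ex_alpha A w h0 hins
    · intro w i hw h0 hl hi hins htg
      exact uni_alpha n A w i hA hw (by omega) h0 hl hi hins htg
  by_cases h2 : ∃ A, C' = A ++ [true] ∧ C = A ++ [false]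
  · obtain ⟨A, hC'e, hCe⟩ := h2
    subst hC'e; subst hCe
    have hA : A.length + 1 = n := by simpa using hC'
    apply main_card n (by omega) _ _ hC hC' n
    · rw [show n = A.length + 1 from by omega]
      rw [show (true :: ((A ++ [true]) ++ [false])).getD (A.length+1) false
          = ((A ++ [true]) ++ [false]).getD A.length false from List.getD_cons_succ]
      rw [List.getD_append _ _ _ _ (by simp), List.getD_append_right _ _ _ _ (le_refl _), Nat.sub_self]
      rfl
    · rw [show n + 1 = (A ++ [true]).length + 1 from by simp; omega]
      exact patt_last (A ++ [true]) true
    · intro w hw h0 hl hins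
      exact ex_beta n A w hA hw hl hins
    · intro w i hw h0 hl hi hins htg
      exact uni_beta n A w i hA hw (by omega) h0 hl hi hins htg
  by_cases h3 : ∃ A A', C' = A ++ true :: false :: A' ∧ C = A ++ false :: true :: A'
  · obtain ⟨A, A', hC'e, hCe⟩ := h3
    subst hC'e; subst hCe
    have hL : A.length + 2 + A'.length = n := by simp at hC'; omega
    have hg' : (A ++ true :: false :: A') ++ [false] = (A ++ true :: false :: A') ++ [false] := rfl
    apply main_card n (by omega) _ _ hC hC' (A.length + 1)
    · rw [show (true :: ((A ++ true :: false :: A') ++ [false]) : List Bool)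
          = true :: ((A ++ true :: false :: A') ++ [false]) from rfl]
      exact bulk_patt_k A A' false
    · rw [show A.length + 1 + 1 = A.length + 2 from rfl]
      exact bulk_patt_k1 A A' true
    · intro w hw h0 hl hins
      exact ex_bulk n A A' w hL hw hins
    · intro w i hw h0 hl hi hins htg
      exact uni_bulk n A A' w i hL hw (by omega) h0 hl hi hins htg
  · exfalso
    apply hW
    rw [rate, if_neg h1, if_neg h2, if_neg h3]
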